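/- Let c = (n, 0, 1, ..., n-1) ∈ S_{n+1} in one-line notation (an (n+1)-cycle, a Coxeter element). Then the Bruhat interval [id, c] is isomorphic as a poset to the Boolean lattice of subsets of an n-element set. -/

import Mathlib

open Polynomial

/-- Number of inversions (the Coxeter length) of a permutation of `Fin n`. -/
def invCount {n : ℕ} (x : Equiv.Perm (Fin n)) : ℕ :=
  (Finset.univ.filter (fun p : Fin n × Fin n => p.1 < p.2 ∧ x p.2 < x p.1)).card

/-- Bruhat order on the symmetric group `S_n = Perm (Fin n)`: `x ≤ y` iff there is an
upward path from `x` to `y` in the Bruhat graph (edges: multiplication by a transposition,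
oriented by increasing length). -/
def BruhatLE {n : ℕ} (x y : Equiv.Perm (Fin n)) : Prop :=
  Relation.ReflTransGen
    (fun u v => (∃ i j : Fin n, i ≠ j ∧ v = Equiv.swap i j * u) ∧ invCount u < invCount v)
    x y

def BruhatLT {n : ℕ} (x y : Equiv.Perm (Fin n)) : Prop :=
  BruhatLE x y ∧ x ≠ y


namespace BooleanAux

variable {n : ℕ}

def memA (A : Finset (Fin n)) (k : ℕ) : Prop :=
  if h : k < n then (⟨k, h⟩ : Fin n) ∈ A else False

instance (A : Finset (Fin n)) (k : ℕ) : Decidable (memA A k) := by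
  unfold memA; split <;> infer_instance

lemma memA_lt {A : Finset (Fin n)} {k : ℕ} (h : memA A k) : k < n := by
  by_contra hk
  simp only [memA, dif_neg hk] at h

lemma not_memA_of_le {A : Finset (Fin n)} {k : ℕ} (h : n ≤ k) : ¬ memA A k :=
  fun hm => absurd (memA_lt hm) (not_lt.mpr h)

lemma memA_mk {A : Finset (Fin n)} {k : ℕ} (h : k < n) : memA A k ↔ (⟨k, h⟩ : Fin n) ∈ A := by
  simp [memA, h]

lemma memA_coe {A : Finset (Fin n)} (a : Fin n) : memA A (a : ℕ) ↔ a ∈ A := by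
  rw [memA_mk a.2]

/-- the smallest `j ≥ i` not in `A`. -/
def nextNot (A : Finset (Fin n)) (i : ℕ) : ℕ :=
  Nat.find (⟨max i n, le_max_left _ _, not_memA_of_le (le_max_right _ _)⟩ :
    ∃ j, i ≤ j ∧ ¬ memA A j)

lemma le_nextNot (A : Finset (Fin n)) (i : ℕ) : i ≤ nextNot A i :=
  (Nat.find_spec (p := fun j => i ≤ j ∧ ¬ memA A j) _).1

lemma not_memA_nextNot (A : Finset (Fin n)) (i : ℕ) : ¬ memA A (nextNot A i) :=
  (Nat.find_spec (p := fun j => i ≤ j ∧ ¬ memA A j) _).2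

lemma memA_of_lt_nextNot {A : Finset (Fin n)} {i k : ℕ} (h1 : i ≤ k) (h2 : k < nextNot A i) :
    memA A k := by
  have := Nat.find_min (p := fun j => i ≤ j ∧ ¬ memA A j)
    (⟨max i n, le_max_left _ _, not_memA_of_le (le_max_right _ _)⟩) h2
  simpa [h1] using this

lemma nextNot_le {A : Finset (Fin n)} {i j : ℕ} (h1 : i ≤ j) (h2 : ¬ memA A j) :
    nextNot A i ≤ j :=
  Nat.find_min' _ ⟨h1, h2⟩

lemma nextNot_eq {A : Finset (Fin n)} {i j : ℕ} (h1 : i ≤ j) (h2 : ¬ memA A j)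
    (h3 : ∀ k, i ≤ k → k < j → memA A k) : nextNot A i = j := by
  refine le_antisymm (nextNot_le h1 h2) ?_
  by_contra h
  push_neg at h
  exact not_memA_nextNot A i (h3 _ (le_nextNot A i) h)

lemma nextNot_le_n {A : Finset (Fin n)} {i : ℕ} (h : i ≤ n) : nextNot A i ≤ n :=
  nextNot_le h (not_memA_of_le le_rfl)

/-- start of the run of elements of `A` just below `j`. -/
def runStart (A : Finset (Fin n)) : ℕ → ℕ
  | 0 => 0
  | (j+1) => if memA A j then runStart A j else j + 1

lemma runStart_le (A : Finset (Fin n)) (j : ℕ) : runStart A j ≤ j := by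
  induction j with
  | zero => simp [runStart]
  | succ j ih =>
    rw [runStart]
    split
    · omega
    · omega

lemma memA_of_runStart_le {A : Finset (Fin n)} {j k : ℕ} (h1 : runStart A j ≤ k) (h2 : k < j) :
    memA A k := by
  induction j with
  | zero => omega
  | succ j ih =>
    rw [runStart] at h1
    split at h1
    · rcases Nat.lt_succ_iff_lt_or_eq.mp h2 with h | h
      · exact ih h1 h
      · subst h; assumption
    · omega

lemma runStart_boundary (A : Finset (Fin n)) (j : ℕ) :
    runStart A j = 0 ∨ ¬ memA A (runStart A j - 1) := by
  induction j with
  | zero => left; rfl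
  | succ j ih =>
    rw [runStart]
    split
    · exact ih
    · right; simpa

lemma runStart_eq {A : Finset (Fin n)} {i j : ℕ} (h1 : i ≤ j)
    (h2 : ∀ k, i ≤ k → k < j → memA A k) (h3 : i = 0 ∨ ¬ memA A (i - 1)) :
    runStart A j = i := by
  induction j with
  | zero =>
    have : i = 0 := Nat.le_zero.mp h1
    simp [runStart, this]
  | succ j ih =>
    rw [runStart]
    by_cases hm : memA A j
    · rw [if_pos hm]
      rcases Nat.lt_succ_iff_lt_or_eq.mp (Nat.lt_succ_of_le h1) with h | h
      · exact ih (by omega) (fun k hk1 hk2 => h2 k hk1 (by omega))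
      · exfalso
        subst h
        rcases h3 with h | h
        · omega
        · simp at h; exact h hm
    · rw [if_neg hm]
      by_contra hne
      exact hm (h2 j (by omega) (by omega))

def fA (A : Finset (Fin n)) (i : ℕ) : ℕ :=
  if 0 < i ∧ memA A (i - 1) then i - 1 else nextNot A i

def gA (A : Finset (Fin n)) (j : ℕ) : ℕ :=
  if memA A j then j + 1 else runStart A j

lemma gA_fA (A : Finset (Fin n)) (i : ℕ) : gA A (fA A i) = i := by
  unfold fA
  split
  next h =>
    rw [gA, if_pos h.2]; omega
  next h =>
    rw [gA, if_neg (not_memA_nextNot A i)]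
    exact runStart_eq (le_nextNot A i) (fun k h1 h2 => memA_of_lt_nextNot h1 h2)
      (by push_neg at h; rcases Nat.eq_zero_or_pos i with h0 | h0
          · exact Or.inl h0
          · exact Or.inr (h h0))

lemma fA_gA (A : Finset (Fin n)) (j : ℕ) : fA A (gA A j) = j := by
  unfold gA
  split
  next h =>
    rw [fA, if_pos ⟨Nat.succ_pos _, by simpa using h⟩]
    omega
  next h =>
    rw [fA, if_neg ?_]
    · exact nextNot_eq (runStart_le A j) h (fun k h1 h2 => memA_of_runStart_le h1 h2)
    · rcases runStart_boundary A j with h' | h'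
      · omega
      · rintro ⟨-, h''⟩; exact h' h''

lemma fA_le {A : Finset (Fin n)} {i : ℕ} (h : i ≤ n) : fA A i ≤ n := by
  unfold fA
  split
  · omega
  · exact nextNot_le_n h

lemma gA_le {A : Finset (Fin n)} {j : ℕ} (h : j ≤ n) : gA A j ≤ n := by
  unfold gA
  split
  next hm => have := memA_lt hm; omega
  · have := runStart_le A j; omega

def zperm (A : Finset (Fin n)) : Equiv.Perm (Fin (n + 1)) where
  toFun := fun i => ⟨fA A i, Nat.lt_succ_of_le (fA_le (Nat.lt_succ_iff.mp i.2))⟩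
  invFun := fun j => ⟨gA A j, Nat.lt_succ_of_le (gA_le (Nat.lt_succ_iff.mp j.2))⟩
  left_inv := fun i => Fin.ext (gA_fA A i)
  right_inv := fun j => Fin.ext (fA_gA A j)

@[simp] lemma zperm_coe (A : Finset (Fin n)) (i : Fin (n+1)) :
    (zperm A i : ℕ) = fA A (i : ℕ) := rfl


lemma inv_iff (A : Finset (Fin n)) (i j : ℕ) (hi : i ≤ n) (hj : j ≤ n) :
    (i < j ∧ fA A j < fA A i) ↔ (0 < j ∧ memA A (j - 1) ∧ i = runStart A (j - 1)) := by
  constructor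
  · rintro ⟨hij, hinv⟩
    have hj0 : 0 < j := by omega
    have hm : memA A (j - 1) := by
      by_contra hm
      have hfj : fA A j = nextNot A j := by
        rw [fA, if_neg]; rintro ⟨-, h⟩
        exact hm h
      have hfj' : j ≤ fA A j := hfj ▸ le_nextNot A j
      rcases Nat.lt_or_ge i 1 with h0 | h0
      · -- i = 0
        have : fA A i ≤ j - 1 := by
          rw [fA, if_neg (by omega)]
          exact nextNot_le (by omega) hm
        omega
      · by_cases hc : 0 < i ∧ memA A (i - 1)
        · have : fA A i = i - 1 := by rw [fA, if_pos hc]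
          omega
        · have : fA A i = nextNot A i := by rw [fA, if_neg hc]
          have : fA A i ≤ j - 1 := this ▸ nextNot_le (by omega) hm
          omega
    refine ⟨hj0, hm, ?_⟩
    have hfj : fA A j = j - 1 := by rw [fA, if_pos ⟨hj0, hm⟩]
    have hc : ¬ (0 < i ∧ memA A (i - 1)) := by
      rintro ⟨h1, h2⟩
      have : fA A i = i - 1 := by rw [fA, if_pos ⟨h1, h2⟩]
      omega
    have hfi : fA A i = nextNot A i := by rw [fA, if_neg hc]
    have hNi : j - 1 < nextNot A i := by omega
    symm
    refine runStart_eq (by omega) (fun k hk1 hk2 => memA_of_lt_nextNot hk1 (by omega)) ?_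
    push_neg at hc
    rcases Nat.eq_zero_or_pos i with h0 | h0
    · exact Or.inl h0
    · exact Or.inr (hc h0)
  · rintro ⟨hj0, hm, hru⟩
    have hrs := runStart_le A (j-1)
    have hfj : fA A j = j - 1 := by rw [fA, if_pos ⟨hj0, hm⟩]
    have hbd := runStart_boundary A (j-1)
    have hcond : ¬ (0 < i ∧ memA A (i-1)) := by
      rintro ⟨h1, h2⟩
      rcases hbd with h | h
      · omega
      · rw [← hru] at h; exact h h2
    have hfi : fA A i = nextNot A i := by rw [fA, if_neg hcond]
    have hN : j - 1 < nextNot A i := by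
      by_contra hle
      push_neg at hle
      rcases Nat.lt_or_ge (nextNot A i) (j-1) with h | h
      · exact not_memA_nextNot A i
          (memA_of_runStart_le (hru ▸ le_nextNot A i) h)
      · have : nextNot A i = j - 1 := by omega
        exact not_memA_nextNot A i (this ▸ hm)
    constructor
    · omega
    · omega

lemma invCount_zperm (A : Finset (Fin n)) : invCount (zperm A) = A.card := by
  have hset : (Finset.univ.filter
      (fun p : Fin (n+1) × Fin (n+1) => p.1 < p.2 ∧ zperm A p.2 < zperm A p.1)) =
      A.image (fun a : Fin n =>
        ((⟨runStart A (a : ℕ), by have := runStart_le A (a:ℕ); omega⟩ : Fin (n+1)),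
         (⟨(a : ℕ) + 1, by omega⟩ : Fin (n+1)))) := by
    ext ⟨i, j⟩
    simp only [Finset.mem_filter, Finset.mem_univ, true_and, Finset.mem_image,
      Fin.lt_def, zperm_coe, Prod.mk.injEq]
    rw [inv_iff A (i : ℕ) (j : ℕ) (by omega) (by omega)]
    constructor
    · rintro ⟨hj0, hm, hru⟩
      have hlt := memA_lt hm
      refine ⟨⟨j - 1, hlt⟩, (memA_mk hlt).mp hm, ?_, ?_⟩
      · exact Fin.ext (by simp [hru])
      · exact Fin.ext (by simp; omega)
    · rintro ⟨a, ha, h1, h2⟩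
      have hj : (j : ℕ) = (a : ℕ) + 1 := by rw [← h2]
      have hi : (i : ℕ) = runStart A (a : ℕ) := by rw [← h1]
      refine ⟨by omega, ?_, by rw [hi, hj]; simp⟩
      rw [hj]
      simpa using (memA_mk a.2).mpr (by simpa using ha)
  rw [invCount, hset]
  rw [Finset.card_image_of_injective]
  intro a b hab
  have := congrArg (fun p => (p.2 : ℕ)) hab
  simp at this
  exact Fin.ext this


lemma memA_insert {A : Finset (Fin n)} {a : Fin n} (k : ℕ) :
    memA (insert a A) k ↔ memA A k ∨ k = (a : ℕ) := by
  constructor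
  · intro h
    have hk := memA_lt h
    rw [memA_mk hk, Finset.mem_insert] at h
    rcases h with h | h
    · right; rw [← h]
    · left; exact (memA_mk hk).mpr h
  · rintro (h | h)
    · have hk := memA_lt h
      rw [memA_mk hk, Finset.mem_insert]
      right; exact (memA_mk hk).mp h
    · subst h
      rw [memA_coe, Finset.mem_insert]
      left; rfl

lemma fA_insert {A : Finset (Fin n)} {a : Fin n} (ha : a ∉ A) (i : ℕ) :
    fA (insert a A) i =
      if fA A i = (a : ℕ) then nextNot A ((a : ℕ) + 1)
      else if fA A i = nextNot A ((a : ℕ) + 1) then (a : ℕ) else fA A i := by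
  set av := (a : ℕ) with hav
  set y := nextNot A (av + 1) with hy
  have hy1 : av + 1 ≤ y := le_nextNot A _
  have hy2 : ¬ memA A y := not_memA_nextNot A _
  have hy3 : ∀ k, av + 1 ≤ k → k < y → memA A k := fun k h1 h2 => memA_of_lt_nextNot h1 h2
  have hna : ¬ memA A av := fun h => ha ((memA_coe a).mp h)
  have hmemA' : memA (insert a A) av := (memA_insert av).mpr (Or.inr rfl)
  by_cases h1 : i = av + 1
  · subst h1
    have hL : fA (insert a A) (av + 1) = av := by
      rw [fA, if_pos ⟨Nat.succ_pos _, by simp only [Nat.add_sub_cancel]; exact hmemA'⟩]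
      omega
    have hR : fA A (av + 1) = y := by
      rw [fA, if_neg (by rintro ⟨-, h⟩; rw [Nat.add_sub_cancel] at h; exact hna h)]
    rw [hL, hR, if_neg (by omega), if_pos rfl]
  · by_cases h2 : 0 < i ∧ memA A (i - 1)
    · have hL : fA (insert a A) i = i - 1 := by
        rw [fA, if_pos ⟨h2.1, (memA_insert _).mpr (Or.inl h2.2)⟩]
      have hR : fA A i = i - 1 := by rw [fA, if_pos h2]
      rw [hL, hR, if_neg, if_neg]
      · intro h; rw [h] at h2; exact hy2 h2.2
      · intro h; rw [h] at h2; exact hna h2.2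
    · have hc' : ¬ (0 < i ∧ memA (insert a A) (i - 1)) := by
        rintro ⟨hp, hm⟩
        rcases (memA_insert _).mp hm with h | h
        · exact h2 ⟨hp, h⟩
        · exact h1 (by omega)
      have hL : fA (insert a A) i = nextNot (insert a A) i := by rw [fA, if_neg hc']
      have hR : fA A i = nextNot A i := by rw [fA, if_neg h2]
      rw [hL, hR]
      by_cases h3 : nextNot A i = av
      · have hia : i ≤ av := h3 ▸ le_nextNot A i
        rw [if_pos h3]
        refine nextNot_eq (by omega) ?_ ?_
        · intro hm
          rcases (memA_insert _).mp hm with h | h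
          · exact hy2 h
          · omega
        · intro k hk1 hk2
          rcases Nat.lt_trichotomy k av with h | h | h
          · exact (memA_insert _).mpr (Or.inl (memA_of_lt_nextNot hk1 (h3 ▸ h)))
          · exact (memA_insert _).mpr (Or.inr h)
          · exact (memA_insert _).mpr (Or.inl (hy3 k (by omega) hk2))
      · have h4 : nextNot A i ≠ y := by
          intro h4
          rcases Nat.lt_or_ge av i with h | h
          · have h5 : av + 1 ≤ i - 1 := by omega
            have h6 : i - 1 < y := by
              have := le_nextNot A i; omega
            exact h2 ⟨by omega, by
              have := hy3 (i-1) h5 h6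
              exact this⟩
          · exact hna (memA_of_lt_nextNot h (by omega))
        rw [if_neg h3, if_neg h4]
        refine nextNot_eq (le_nextNot A i) ?_ ?_
        · intro hm
          rcases (memA_insert _).mp hm with h | h
          · exact not_memA_nextNot A i h
          · exact h3 h
        · intro k hk1 hk2
          exact (memA_insert _).mpr (Or.inl (memA_of_lt_nextNot hk1 hk2))

lemma zperm_insert {A : Finset (Fin n)} {a : Fin n} (ha : a ∉ A) :
    zperm (insert a A) =
      Equiv.swap (⟨(a : ℕ), by omega⟩ : Fin (n+1))
        ⟨nextNot A ((a : ℕ) + 1), by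
          have := nextNot_le_n (A := A) (i := (a : ℕ) + 1) (by omega); omega⟩ *
        zperm A := by
  ext i
  rw [Equiv.Perm.mul_apply]
  rw [Equiv.swap_apply_def]
  have := fA_insert ha (i : ℕ)
  split
  next h =>
    have hv : fA A (i : ℕ) = (a : ℕ) := by
      simpa [Fin.ext_iff] using h
    simp only [zperm_coe, Fin.ext_iff] at *
    rw [this, if_pos hv]
  next h =>
    split
    next h' =>
      have hv : fA A (i : ℕ) = nextNot A ((a : ℕ) + 1) := by
        simpa [Fin.ext_iff] using h'
      have hv' : fA A (i : ℕ) ≠ (a : ℕ) := by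
        simpa [Fin.ext_iff] using h
      simp only [zperm_coe, Fin.ext_iff] at *
      rw [this, if_neg hv', if_pos hv]
    next h' =>
      have hv : fA A (i : ℕ) ≠ nextNot A ((a : ℕ) + 1) := by
        simpa [Fin.ext_iff] using h'
      have hv' : fA A (i : ℕ) ≠ (a : ℕ) := by
        simpa [Fin.ext_iff] using h
      simp only [zperm_coe, Fin.ext_iff] at *
      rw [this, if_neg hv', if_neg hv]


lemma invCount_swap_lt {N : ℕ} (w : Equiv.Perm (Fin N)) (i j : Fin N)
    (hij : i < j) (hw : w j < w i) :
    invCount (Equiv.swap (w i) (w j) * w) < invCount w := by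
  set w' := Equiv.swap (w i) (w j) * w with hw'
  have hw'i : w' i = w j := by
    rw [hw', Equiv.Perm.mul_apply, Equiv.swap_apply_left]
  have hw'j : w' j = w i := by
    rw [hw', Equiv.Perm.mul_apply, Equiv.swap_apply_right]
  have hw'k : ∀ k, k ≠ i → k ≠ j → w' k = w k := by
    intro k hk1 hk2
    rw [hw', Equiv.Perm.mul_apply, Equiv.swap_apply_of_ne_of_ne
      (fun h => hk1 (w.injective h)) (fun h => hk2 (w.injective h))]
  have hne : i ≠ j := ne_of_lt hij
  have hvne : w j ≠ w i := ne_of_lt hw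
  set ψ : Fin N × Fin N → Fin N × Fin N := fun p =>
    if p.2 = i ∧ w p.1 < w i then (p.1, j)
    else if p.1 = j ∧ w j < w p.2 then (i, p.2) else p with hψ
  have key : ∀ p q : Fin N, p < q → w' q < w' p →
      ((ψ (p, q)).1 < (ψ (p, q)).2 ∧ w (ψ (p, q)).2 < w (ψ (p, q)).1) ∧ ψ (p, q) ≠ (i, j) := by
    intro p q hpq hinv
    by_cases hb1 : q = i ∧ w p < w i
    · obtain ⟨hqi, hpa⟩ := hb1
      have hψv : ψ (p, q) = (p, j) := by rw [hψ]; simp [hqi, hpa]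
      have hpi : p ≠ i := by intro h; rw [h] at hpa; exact lt_irrefl _ hpa
      have hpj : p ≠ j := ne_of_lt (lt_trans (hqi ▸ hpq) hij)
      have hwp : w' p = w p := hw'k p hpi hpj
      have hbp : w j < w p := by
        rw [hqi] at hinv; rw [hw'i, hwp] at hinv; exact hinv
      rw [hψv]
      exact ⟨⟨lt_trans (hqi ▸ hpq) hij, hbp⟩, fun h => hpi (congrArg Prod.fst h)⟩
    · by_cases hb2 : p = j ∧ w j < w q
      · obtain ⟨hpj, hbq⟩ := hb2
        have hqj : q ≠ j := by intro h; rw [hpj, h] at hpq; exact lt_irrefl _ hpq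
        have hqi : q ≠ i := ne_of_gt (lt_trans hij (hpj ▸ hpq))
        have hwq : w' q = w q := hw'k q hqi hqj
        have hqa : w q < w i := by
          rw [hpj] at hinv; rw [hw'j, hwq] at hinv; exact hinv
        have hψv : ψ (p, q) = (i, q) := by
          rw [hψ]
          simp only []
          rw [if_neg, if_pos ⟨hpj, hbq⟩]
          rintro ⟨h, -⟩; exact hqi h
        rw [hψv]
        exact ⟨⟨lt_trans hij (hpj ▸ hpq), hqa⟩, fun h => hqj (congrArg Prod.snd h)⟩
      · have hψv : ψ (p, q) = (p, q) := by rw [hψ]; simp only []; rw [if_neg hb1, if_neg hb2]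
        rw [hψv]
        by_cases hqi : q = i
        · have hpa : ¬ (w p < w i) := fun h => hb1 ⟨hqi, h⟩
          have hpi : p ≠ i := ne_of_lt (hqi ▸ hpq)
          have hpj : p ≠ j := ne_of_lt (lt_trans (hqi ▸ hpq) hij)
          have : w i ≠ w p := fun h => hpi (w.injective h.symm)
          refine ⟨⟨hpq, ?_⟩, fun h => hpi (congrArg Prod.fst h)⟩
          rw [hqi]
          exact lt_of_le_of_ne (not_lt.mp hpa) this
        · by_cases hqj : q = j
          · have hpi : p ≠ i := by
              intro h
              rw [h, hqj, hw'i, hw'j] at hinv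
              exact absurd hinv (not_lt.mpr (le_of_lt hw))
            have hpj : p ≠ j := ne_of_lt (hqj ▸ hpq)
            have hwp : w' p = w p := hw'k p hpi hpj
            have : w i < w p := by rw [hqj, hw'j, hwp] at hinv; exact hinv
            refine ⟨⟨hpq, ?_⟩, fun h => hpi (congrArg Prod.fst h)⟩
            rw [hqj]
            exact lt_trans hw this
          · have hwq : w' q = w q := hw'k q hqi hqj
            by_cases hpi : p = i
            · have : w q < w j := by rw [hpi, hw'i, hwq] at hinv; exact hinv
              exact ⟨⟨hpq, hpi ▸ lt_trans this hw⟩, fun h => hqj (congrArg Prod.snd h)⟩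
            · by_cases hpj : p = j
              · have hbq : ¬ (w j < w q) := fun h => hb2 ⟨hpj, h⟩
                have : w q ≠ w j := fun h => hqj (w.injective h)
                exact ⟨⟨hpq, hpj ▸ lt_of_le_of_ne (not_lt.mp hbq) this⟩,
                  fun h => hpi (congrArg Prod.fst h)⟩
              · have hwp : w' p = w p := hw'k p hpi hpj
                rw [hwp, hwq] at hinv
                exact ⟨⟨hpq, hinv⟩, fun h => hpi (congrArg Prod.fst h)⟩
  -- auxiliary: an element of Inv(w') in the "else" branch with second coord j has w i < w (fst)
  have aux3j : ∀ p : Fin N, p < j → w' j < w' p → ¬ (j = i ∧ w p < w i) → w i < w p := by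
    intro p hpj hinv _
    have hpi : p ≠ i := by
      intro h
      rw [h, hw'i] at hinv
      rw [hw'j] at hinv
      exact absurd hinv (not_lt.mpr (le_of_lt hw))
    have hpj' : p ≠ j := ne_of_lt hpj
    rw [hw'j, hw'k p hpi hpj'] at hinv
    exact hinv
  have aux3i : ∀ q : Fin N, i < q → w' q < w' i → q ≠ j → w q < w j := by
    intro q hiq hinv hqj
    have hqi : q ≠ i := ne_of_gt hiq
    rw [hw'i, hw'k q hqi hqj] at hinv
    exact hinv
  have inj : ∀ p q p' q' : Fin N, (p < q ∧ w' q < w' p) → (p' < q' ∧ w' q' < w' p') →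
      ψ (p, q) = ψ (p', q') → (p, q) = (p', q') := by
    intro p q p' q' hx hx' heq
    have eB1 : ∀ u v : Fin N, (v = i ∧ w u < w i) → ψ (u, v) = (u, j) := by
      intro u v h; rw [hψ]; simp only []; rw [if_pos h]
    have eB2 : ∀ u v : Fin N, ¬ (v = i ∧ w u < w i) → (u = j ∧ w j < w v) →
        ψ (u, v) = (i, v) := by
      intro u v h1 h2; rw [hψ]; simp only []; rw [if_neg h1, if_pos h2]
    have eB3 : ∀ u v : Fin N, ¬ (v = i ∧ w u < w i) → ¬ (u = j ∧ w j < w v) →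
        ψ (u, v) = (u, v) := by
      intro u v h1 h2; rw [hψ]; simp only []; rw [if_neg h1, if_neg h2]
    by_cases hb1 : q = i ∧ w p < w i
    · rw [eB1 _ _ hb1] at heq
      by_cases hb1' : q' = i ∧ w p' < w i
      · rw [eB1 _ _ hb1'] at heq
        have : p = p' := congrArg Prod.fst heq
        rw [this, hb1.1, hb1'.1]
      · by_cases hb2' : p' = j ∧ w j < w q'
        · rw [eB2 _ _ hb1' hb2'] at heq
          have h1 : p = i := congrArg Prod.fst heq
          rw [h1] at hb1
          exact absurd hb1.2 (lt_irrefl _)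
        · rw [eB3 _ _ hb1' hb2'] at heq
          have h1 : p = p' := congrArg Prod.fst heq
          have h2 : q' = j := (congrArg Prod.snd heq).symm
          exfalso
          have hp'j : p' < j := h2 ▸ hx'.1
          have := aux3j p' hp'j (h2 ▸ hx'.2) (fun h => hne h.1.symm)
          rw [← h1] at this
          exact absurd hb1.2 (not_lt.mpr (le_of_lt this))
    · by_cases hb2 : p = j ∧ w j < w q
      · rw [eB2 _ _ hb1 hb2] at heq
        by_cases hb1' : q' = i ∧ w p' < w i
        · rw [eB1 _ _ hb1'] at heq
          have h1 : p' = i := (congrArg Prod.fst heq).symm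
          rw [h1] at hb1'
          exact absurd hb1'.2 (lt_irrefl _)
        · by_cases hb2' : p' = j ∧ w j < w q'
          · rw [eB2 _ _ hb1' hb2'] at heq
            have : q = q' := congrArg Prod.snd heq
            rw [this, hb2.1, hb2'.1]
          · rw [eB3 _ _ hb1' hb2'] at heq
            have h1 : p' = i := (congrArg Prod.fst heq).symm
            have h2 : q' = q := (congrArg Prod.snd heq).symm
            exfalso
            have hq : i < q' := by rw [h1] at hx'; exact hx'.1
            have hq'j : q' ≠ j := by
              intro h
              rw [← h2] at hb2
              rw [h] at hb2
              exact absurd hb2.2 (lt_irrefl _)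
            have := aux3i q' hq (by rw [h1] at hx'; exact hx'.2) hq'j
            rw [h2] at this
            exact absurd hb2.2 (not_lt.mpr (le_of_lt this))
      · rw [eB3 _ _ hb1 hb2] at heq
        by_cases hb1' : q' = i ∧ w p' < w i
        · rw [eB1 _ _ hb1'] at heq
          have h1 : p = p' := congrArg Prod.fst heq
          have h2 : q = j := congrArg Prod.snd heq
          exfalso
          have hpj : p < j := h2 ▸ hx.1
          have := aux3j p hpj (h2 ▸ hx.2) (fun h => hne h.1.symm)
          rw [h1] at this
          exact absurd hb1'.2 (not_lt.mpr (le_of_lt this))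
        · by_cases hb2' : p' = j ∧ w j < w q'
          · rw [eB2 _ _ hb1' hb2'] at heq
            have h1 : p = i := congrArg Prod.fst heq
            have h2 : q = q' := congrArg Prod.snd heq
            exfalso
            have hq : i < q := h1 ▸ hx.1
            have hqj : q ≠ j := by
              intro h
              rw [← h2] at hb2'
              rw [h] at hb2'
              exact absurd hb2'.2 (lt_irrefl _)
            have := aux3i q hq (h1 ▸ hx.2) hqj
            rw [h2] at this
            exact absurd hb2'.2 (not_lt.mpr (le_of_lt this))
          · rw [eB3 _ _ hb1' hb2'] at heq
            exact heq
  -- now conclude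
  have hmem : (i, j) ∈ Finset.univ.filter
      (fun p : Fin N × Fin N => p.1 < p.2 ∧ w p.2 < w p.1) := by
    simp only [Finset.mem_filter, Finset.mem_univ, true_and]
    exact ⟨hij, hw⟩
  have hcard : invCount w' ≤
      ((Finset.univ.filter (fun p : Fin N × Fin N => p.1 < p.2 ∧ w p.2 < w p.1)).erase (i, j)).card := by
    rw [invCount]
    apply Finset.card_le_card_of_injOn ψ
    · rintro ⟨p, q⟩ hpq
      simp only [Finset.mem_coe, Finset.mem_filter, Finset.mem_univ, true_and] at hpq
      obtain ⟨h1, h2⟩ := key p q hpq.1 hpq.2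
      rw [Finset.mem_coe, Finset.mem_erase]
      exact ⟨h2, by simp only [Finset.mem_filter, Finset.mem_univ, true_and]; exact h1⟩
    · rintro ⟨p, q⟩ hpq ⟨p', q'⟩ hpq' heq
      simp only [Finset.coe_filter, Set.mem_setOf_eq, Finset.mem_univ, true_and] at hpq hpq'
      exact inj p q p' q' hpq hpq' heq
  calc invCount w' ≤ _ := hcard
    _ < invCount w := Finset.card_erase_lt_of_mem hmem


lemma memA_erase {A : Finset (Fin n)} {m : Fin n} (k : ℕ) :
    memA (A.erase m) k ↔ memA A k ∧ k ≠ (m : ℕ) := by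
  constructor
  · intro h
    have hk := memA_lt h
    rw [memA_mk hk, Finset.mem_erase] at h
    refine ⟨(memA_mk hk).mpr h.2, ?_⟩
    intro he
    exact h.1 (Fin.ext he)
  · rintro ⟨h, hne⟩
    have hk := memA_lt h
    rw [memA_mk hk, Finset.mem_erase]
    exact ⟨fun he => hne (congrArg Fin.val he), (memA_mk hk).mp h⟩

lemma zperm_inj : Function.Injective (zperm (n := n)) := by
  intro A B h
  have hfa : ∀ i : ℕ, i ≤ n → fA A i = fA B i := by
    intro i hi
    have := congrArg (fun e => ((e : Equiv.Perm (Fin (n+1))) ⟨i, by omega⟩ : ℕ)) h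
    simpa using this
  have hmem : ∀ C : Finset (Fin n), ∀ a : Fin n, a ∈ C ↔ fA C ((a : ℕ) + 1) = (a : ℕ) := by
    intro C a
    constructor
    · intro ha
      rw [fA, if_pos ⟨Nat.succ_pos _, by simpa only [Nat.add_sub_cancel] using (memA_coe a).mpr ha⟩]
      omega
    · intro hf
      by_contra ha
      rw [fA, if_neg] at hf
      · have := le_nextNot C ((a : ℕ) + 1)
        omega
      · rintro ⟨-, hm⟩
        rw [Nat.add_sub_cancel] at hm
        exact ha ((memA_coe a).mp hm)
  ext a
  rw [hmem A a, hmem B a, hfa _ (by omega)]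

lemma zperm_empty : zperm (∅ : Finset (Fin n)) = 1 := by
  ext i
  have h1 : ¬ memA (∅ : Finset (Fin n)) ((i : ℕ) - 1) := by
    intro h
    have hk := memA_lt h
    rw [memA_mk hk] at h
    exact absurd h (Finset.notMem_empty _)
  have h2 : ¬ memA (∅ : Finset (Fin n)) (i : ℕ) := by
    intro h
    have hk := memA_lt h
    rw [memA_mk hk] at h
    exact absurd h (Finset.notMem_empty _)
  simp only [zperm_coe, Equiv.Perm.coe_one, id_eq]
  rw [fA, if_neg (fun hc => h1 hc.2), nextNot_eq le_rfl h2 (fun k h1 h2 => by omega)]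

lemma bruhat_step {A : Finset (Fin n)} {a : Fin n} (ha : a ∉ A) :
    BruhatLE (zperm A) (zperm (insert a A)) := by
  apply Relation.ReflTransGen.single
  constructor
  · refine ⟨⟨(a : ℕ), by omega⟩, ⟨nextNot A ((a : ℕ) + 1), by
      have := nextNot_le_n (A := A) (i := (a : ℕ) + 1) (by omega); omega⟩, ?_, zperm_insert ha⟩
    intro h
    have := le_nextNot A ((a : ℕ) + 1)
    have := congrArg Fin.val h
    simp at this
    omega
  · rw [invCount_zperm, invCount_zperm, Finset.card_insert_of_notMem ha]
    omega

lemma le_of_subset {A B : Finset (Fin n)} (h : A ⊆ B) :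
    BruhatLE (zperm A) (zperm B) := by
  classical
  have key : ∀ s : Finset (Fin n), BruhatLE (zperm A) (zperm (A ∪ s)) := by
    intro s
    induction s using Finset.induction with
    | empty =>
      rw [Finset.union_empty]
      exact Relation.ReflTransGen.refl
    | @insert a s ha ih =>
      rw [Finset.union_insert]
      by_cases h' : a ∈ A ∪ s
      · rw [Finset.insert_eq_self.mpr h']
        exact ih
      · exact Relation.ReflTransGen.trans ih (bruhat_step h')
  have := key B
  rwa [Finset.union_eq_right.mpr h] at this

lemma down_step_aux {A : Finset (Fin n)} {u : Equiv.Perm (Fin (n+1))} {i j : Fin (n+1)}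
    (hij : i < j) (heq : zperm A = Equiv.swap i j * u)
    (hlt : invCount u < invCount (zperm A)) :
    ∃ B, B ⊆ A ∧ u = zperm B := by
  have hu : u = Equiv.swap i j * zperm A := by
    rw [heq, ← mul_assoc, Equiv.swap_mul_self, one_mul]
  set z := zperm A with hz
  set p := z.symm i with hp
  set q := z.symm j with hq
  have hzp : z p = i := z.apply_symm_apply i
  have hzq : z q = j := z.apply_symm_apply j
  have hpq : p ≠ q := by
    intro h
    rw [hp, hq] at h
    exact (ne_of_lt hij) (z.symm.injective h)
  rcases lt_or_gt_of_ne hpq with hlt' | hlt'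
  · -- p < q : contradiction
    exfalso
    have hup : u p = j := by rw [hu, Equiv.Perm.mul_apply, hzp, Equiv.swap_apply_left]
    have huq : u q = i := by rw [hu, Equiv.Perm.mul_apply, hzq, Equiv.swap_apply_right]
    have := invCount_swap_lt u p q hlt' (by rw [hup, huq]; exact hij)
    rw [hup, huq, Equiv.swap_comm] at this
    rw [hu, ← mul_assoc, Equiv.swap_mul_self, one_mul] at this
    rw [hu] at hlt
    omega
  · -- q < p
    have hqp : (q : ℕ) < (p : ℕ) := hlt'
    have hinv : ((q : ℕ) < (p : ℕ) ∧ fA A (p : ℕ) < fA A (q : ℕ)) := by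
      refine ⟨hqp, ?_⟩
      have h1 : fA A (p : ℕ) = (i : ℕ) := by rw [← hzp]; rfl
      have h2 : fA A (q : ℕ) = (j : ℕ) := by rw [← hzq]; rfl
      rw [h1, h2]
      exact hij
    rw [inv_iff A (q : ℕ) (p : ℕ) (by omega) (by omega)] at hinv
    obtain ⟨hp0, hm, hrs⟩ := hinv
    set m : Fin n := ⟨(p : ℕ) - 1, memA_lt hm⟩ with hmdef
    have hmA : m ∈ A := (memA_mk (memA_lt hm)).mp hm
    set B := A.erase m with hB
    have hmB : m ∉ B := Finset.notMem_erase m A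
    have hins : insert m B = A := Finset.insert_erase hmA
    have hiv : (i : ℕ) = (m : ℕ) := by
      have h1 : fA A (p : ℕ) = (i : ℕ) := by rw [← hzp]; rfl
      rw [← h1, fA, if_pos ⟨hp0, hm⟩]
    have hqm : (q : ℕ) ≤ (m : ℕ) := by
      have := runStart_le A ((p : ℕ) - 1)
      rw [← hrs] at this
      simpa using this
    have hjv : (j : ℕ) = nextNot A (q : ℕ) := by
      have h2 : fA A (q : ℕ) = (j : ℕ) := by rw [← hzq]; rfl
      rw [← h2, fA, if_neg]
      rintro ⟨hq0, hqm'⟩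
      rcases runStart_boundary A ((p : ℕ) - 1) with h | h
      · omega
      · rw [← hrs] at h
        exact h hqm'
    have hNlo : (p : ℕ) ≤ nextNot A (q : ℕ) := by
      by_contra hcon
      push_neg at hcon
      have h1 : (q : ℕ) ≤ nextNot A (q : ℕ) := le_nextNot A _
      have h2 : memA A (nextNot A (q : ℕ)) := by
        rcases Nat.lt_or_ge (nextNot A (q : ℕ)) ((p : ℕ) - 1) with h | h
        · exact memA_of_runStart_le (hrs ▸ h1) h
        · have : nextNot A (q : ℕ) = (p : ℕ) - 1 := by omega
          rw [this]; exact hm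
      exact not_memA_nextNot A _ h2
    have hNB : nextNot B ((m : ℕ) + 1) = nextNot A (q : ℕ) := by
      refine nextNot_eq ?_ ?_ ?_
      · have : (m : ℕ) + 1 = (p : ℕ) := by simp [hmdef]; omega
        omega
      · rw [memA_erase]
        rintro ⟨h, -⟩
        exact not_memA_nextNot A _ h
      · intro k hk1 hk2
        rw [memA_erase]
        exact ⟨memA_of_lt_nextNot (by omega) hk2, by omega⟩
    have hswap : zperm A = Equiv.swap i j * zperm B := by
      rw [← hins, zperm_insert hmB]
      congr 1
      congr 1
      · exact Fin.ext hiv.symm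
      · refine Fin.ext ?_
        simp only []
        rw [hNB, hjv]
    refine ⟨B, Finset.erase_subset m A, ?_⟩
    rw [hu, hz, hswap, ← mul_assoc, Equiv.swap_mul_self, one_mul]

lemma down_step {A : Finset (Fin n)} {u : Equiv.Perm (Fin (n+1))} {i j : Fin (n+1)}
    (hne : i ≠ j) (heq : zperm A = Equiv.swap i j * u)
    (hlt : invCount u < invCount (zperm A)) :
    ∃ B, B ⊆ A ∧ u = zperm B := by
  rcases lt_or_gt_of_ne hne with h | h
  · exact down_step_aux h heq hlt
  · rw [Equiv.swap_comm] at heq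
    exact down_step_aux h heq hlt

lemma interval_char {A : Finset (Fin n)} {z : Equiv.Perm (Fin (n+1))}
    (h : BruhatLE z (zperm A)) : ∃ B, B ⊆ A ∧ z = zperm B := by
  unfold BruhatLE at h
  induction h using Relation.ReflTransGen.head_induction_on with
  | refl => exact ⟨A, Finset.Subset.refl A, rfl⟩
  | head h' _ ih =>
    obtain ⟨B, hBA, hB⟩ := ih
    obtain ⟨⟨i, j, hij, hswap⟩, hlt⟩ := h'
    rw [hB] at hswap hlt
    obtain ⟨B', hB'B, hB'⟩ := down_step hij hswap hlt
    exact ⟨B', Finset.Subset.trans hB'B hBA, hB'⟩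

end BooleanAux

/-- for the Coxeter element `c = (n, 0, 1, …, n-1) ∈ S_{n+1}` (in one-line
notation), the Bruhat interval `[id, c]` is isomorphic as a poset to the Boolean lattice
of subsets of an `n`-element set. -/
theorem interval_below_coxeter_is_boolean (n : ℕ) (c : Equiv.Perm (Fin (n + 1)))
    (hc0 : (c 0 : ℕ) = n) (hc : ∀ i : Fin (n + 1), i ≠ 0 → (c i : ℕ) = (i : ℕ) - 1) :
    ∃ e : Finset (Fin n) ≃ {z : Equiv.Perm (Fin (n + 1)) // BruhatLE 1 z ∧ BruhatLE z c},
      ∀ A B : Finset (Fin n), A ⊆ B ↔ BruhatLE (e A : Equiv.Perm (Fin (n + 1))) (e B) := by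
  classical
  have hcu : c = BooleanAux.zperm (Finset.univ : Finset (Fin n)) := by
    ext i
    by_cases h0 : i = 0
    · subst h0
      rw [hc0, BooleanAux.zperm_coe]
      have h00 : ((0 : Fin (n+1)) : ℕ) = 0 := rfl
      rw [h00, BooleanAux.fA, if_neg (by rintro ⟨h, -⟩; exact absurd h (lt_irrefl 0))]
      symm
      refine BooleanAux.nextNot_eq (Nat.zero_le n) (BooleanAux.not_memA_of_le le_rfl) ?_
      intro k _ hk
      exact (BooleanAux.memA_mk hk).mpr (Finset.mem_univ _)
    · rw [hc i h0, BooleanAux.zperm_coe]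
      have hi0 : 0 < (i : ℕ) := by
        rcases Nat.eq_zero_or_pos (i : ℕ) with h | h
        · exact absurd (Fin.ext (by simpa using h)) h0
        · exact h
      have him : (i : ℕ) - 1 < n := by
        have := i.isLt; omega
      rw [BooleanAux.fA, if_pos ⟨hi0, (BooleanAux.memA_mk him).mpr (Finset.mem_univ _)⟩]
  set F : Finset (Fin n) → {z : Equiv.Perm (Fin (n + 1)) // BruhatLE 1 z ∧ BruhatLE z c} :=
    fun A => ⟨BooleanAux.zperm A, by
      constructor
      · rw [← BooleanAux.zperm_empty]
        exact BooleanAux.le_of_subset (Finset.empty_subset A)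
      · rw [hcu]
        exact BooleanAux.le_of_subset (Finset.subset_univ A)⟩ with hF
  have hFinj : Function.Injective F := by
    intro A B h
    exact BooleanAux.zperm_inj (congrArg Subtype.val h)
  have hFsurj : Function.Surjective F := by
    rintro ⟨z, h1, h2⟩
    rw [hcu] at h2
    obtain ⟨B, -, hB⟩ := BooleanAux.interval_char h2
    exact ⟨B, Subtype.ext hB.symm⟩
  refine ⟨Equiv.ofBijective F ⟨hFinj, hFsurj⟩, ?_⟩
  intro A B
  show A ⊆ B ↔ BruhatLE (BooleanAux.zperm A) (BooleanAux.zperm B)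
  constructor
  · exact fun h => BooleanAux.le_of_subset h
  · intro h
    obtain ⟨C, hCB, hC⟩ := BooleanAux.interval_char h
    rw [BooleanAux.zperm_inj hC]
    exact hCB
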